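/- For every real number p ≥ 1, ∫_0^1 (1 - t^p)^(-(p-1)/p) dt = (1/p) ∫_0^1 u^(1/p - 1) (1 - u)^(1/p - 1) du. (That is, π_p = 2·β(1/p, 1/p), where β is the Beta function.) -/

import Mathlib

open Real intervalIntegral MeasureTheory

/-- For every `p ≥ 1`,
`∫_0^1 (1-t^p)^(-(p-1)/p) dt = (1/p) ∫_0^1 u^(1/p-1) (1-u)^(1/p-1) du`,
i.e. `π_p = 2 β(1/p, 1/p)`. -/
theorem pi_p_beta (p : ℝ) (hp : 1 ≤ p) :
    (∫ t in (0 : ℝ)..1, (1 - t ^ p) ^ (-(p - 1) / p))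
      = (1 / p) * ∫ u in (0 : ℝ)..1, u ^ (1 / p - 1) * (1 - u) ^ (1 / p - 1) := by
  have hp0 : (0 : ℝ) < p := lt_of_lt_of_le one_pos hp
  have hexp : -(p - 1) / p = 1 / p - 1 := by field_simp; ring
  rw [hexp]
  rw [intervalIntegral.integral_of_le (by norm_num : (0:ℝ) ≤ 1),
      intervalIntegral.integral_of_le (by norm_num : (0:ℝ) ≤ 1),
      MeasureTheory.integral_Ioc_eq_integral_Ioo,
      MeasureTheory.integral_Ioc_eq_integral_Ioo]
  have himg : (fun t : ℝ => t ^ p) '' Set.Ioo 0 1 = Set.Ioo 0 1 := by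
    ext u
    constructor
    · rintro ⟨t, ⟨ht0, ht1⟩, rfl⟩
      exact ⟨Real.rpow_pos_of_pos ht0 p, Real.rpow_lt_one ht0.le ht1 hp0⟩
    · rintro ⟨hu0, hu1⟩
      refine ⟨u ^ (1 / p), ⟨Real.rpow_pos_of_pos hu0 _, Real.rpow_lt_one hu0.le hu1 (by positivity)⟩, ?_⟩
      show (u ^ (1 / p)) ^ p = u
      rw [← Real.rpow_mul hu0.le, one_div, inv_mul_cancel₀ hp0.ne', Real.rpow_one]
  have key : (∫ u in Set.Ioo (0:ℝ) 1, u ^ (1 / p - 1) * (1 - u) ^ (1 / p - 1))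
      = ∫ t in Set.Ioo (0:ℝ) 1,
          |p * t ^ (p - 1)| • ((t ^ p) ^ (1 / p - 1) * (1 - t ^ p) ^ (1 / p - 1)) := by
    conv_lhs => rw [← himg]
    apply MeasureTheory.integral_image_eq_integral_abs_deriv_smul measurableSet_Ioo
    · intro t ht
      exact (Real.hasDerivAt_rpow_const (Or.inl ht.1.ne')).hasDerivWithinAt
    · intro x hx y hy hxy
      have : x ^ p < y ^ p ∨ y ^ p < x ^ p → False := by
        rintro (h | h) <;> simp [hxy] at h
      rcases lt_trichotomy x y with h | h | h
      · exact absurd (Real.rpow_lt_rpow hx.1.le h hp0) (by simp [hxy])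
      · exact h
      · exact absurd (Real.rpow_lt_rpow hy.1.le h hp0) (by simp [hxy])
  rw [key, ← smul_eq_mul, ← MeasureTheory.integral_smul]
  apply MeasureTheory.setIntegral_congr_fun measurableSet_Ioo
  intro t ht
  have ht0 := ht.1
  have h1 : |p * t ^ (p - 1)| = p * t ^ (p - 1) := by
    rw [abs_of_nonneg]
    positivity
  have h2 : (t ^ p) ^ (1 / p - 1) = t ^ (1 - p) := by
    rw [← Real.rpow_mul ht0.le]
    congr 1
    field_simp
  simp only [smul_eq_mul, h1, h2]
  have h3 : t ^ (p - 1) * t ^ (1 - p) = 1 := by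
    rw [← Real.rpow_add ht0]
    norm_num
  field_simp
  linear_combination (-(1 - t ^ p) ^ ((1 - p) / p)) * h3
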